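/- Let n, d, m be positive integers with d ≥ 2. Let K and L be finite sets of nonnegative integers, let α_k ∈ ℝ for k ∈ K and β_ℓ ∈ ℝ for ℓ ∈ L, and define ψ(x) = Σ_{k∈K} α_k x^k and φ(x) = Σ_{ℓ∈L} β_ℓ x^ℓ. For ℓ ∈ L and a nonnegative integer r, define γ_{ℓ,r} = Σ α_{k_1}⋯α_{k_ℓ}, the sum over all tuples (k_1, …, k_ℓ) ∈ K^ℓ with k_1 + ⋯ + k_ℓ = r (with the convention γ_{0,r} = 1 if r = 0 and γ_{0,r} = 0 otherwise). Let u ∈ ℝ^n, let v ∈ ℝ^d with v_d = 1, let w = e_d ∈ ℝ^d (the d-th standard coordinate vector), and let z ∈ ℝ^m. Then ψ(uvᵀ) • φ(ψ(uvᵀ)wzᵀ) = Σ_{k∈K} Σ_{ℓ∈L} Σ_{r} α_k β_ℓ γ_{ℓ,r} u^{(k+r)} (v^{(k)} ⊗ z^{(ℓ)})ᵀ, where the inner sum ranges over all nonnegative integers r expressible as a sum of ℓ elements of K (equivalently, over all r, since γ_{ℓ,r} = 0 otherwise). -/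
import Mathlib


open scoped BigOperators

lemma psi_pow (K : Finset ℕ) (α : ℕ → ℝ) (γ : ℕ → ℕ → ℝ)
    (hγ : ∀ l r, γ l r =
      ∑ k ∈ Finset.filter (fun k : Fin l → ℕ => (∑ i, k i) = r)
          (Fintype.piFinset fun _ : Fin l => K),
        ∏ i, α (k i)) (x : ℝ) (l : ℕ) :
    (∑ k ∈ K, α k * x ^ k) ^ l
      = ∑ r ∈ Finset.range (l * K.sup id + 1), γ l r * x ^ r := by
  rw [Finset.sum_pow']
  rw [← Finset.sum_fiberwise_of_maps_to (t := Finset.range (l * K.sup id + 1)) (g := fun p : Fin l → ℕ => ∑ i, p i)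
    (fun p hp => by
      refine Finset.mem_range.mpr (Nat.lt_succ_of_le ?_)
      calc ∑ i, p i ≤ ∑ _i : Fin l, K.sup id := by
            refine Finset.sum_le_sum fun i _ => ?_
            exact Finset.le_sup (f := id) (Fintype.mem_piFinset.mp hp i)
        _ = l * K.sup id := by simp [Finset.sum_const, mul_comm])]
  refine Finset.sum_congr rfl fun r _ => ?_
  rw [hγ, Finset.sum_mul]
  refine Finset.sum_congr rfl fun p hp => ?_
  simp only [Finset.mem_filter] at hp
  rw [Finset.prod_mul_distrib, Finset.prod_pow_eq_pow_sum, hp.2]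

theorem stmt15 (n d m : ℕ) (hn : 0 < n) (hd : 2 ≤ d) (hm : 0 < m)
    (K L : Finset ℕ) (α β : ℕ → ℝ) (ψ φ : ℝ → ℝ)
    (hψ : ∀ x : ℝ, ψ x = ∑ k ∈ K, α k * x ^ k)
    (hφ : ∀ x : ℝ, φ x = ∑ l ∈ L, β l * x ^ l)
    (γ : ℕ → ℕ → ℝ)
    (hγ : ∀ l r, γ l r =
      ∑ k ∈ Finset.filter (fun k : Fin l → ℕ => (∑ i, k i) = r)
          (Fintype.piFinset fun _ : Fin l => K),
        ∏ i, α (k i))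
    (u : Fin n → ℝ) (v : Fin d → ℝ) (hv : v ⟨d - 1, by omega⟩ = 1)
    (w : Fin d → ℝ)
    (hw : w = fun j : Fin d => if (j : ℕ) = d - 1 then (1 : ℝ) else 0)
    (z : Fin m → ℝ) :
    ∀ (i : Fin n) (jk : Fin d × Fin m),
      ψ (u i * v jk.1) * φ ((∑ j, ψ (u i * v j) * w j) * z jk.2) =
      ∑ k ∈ K, ∑ l ∈ L, ∑ r ∈ Finset.range (l * K.sup id + 1),
        α k * β l * γ l r * u i ^ (k + r) * (v jk.1 ^ k * z jk.2 ^ l) := by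
  intro i jk
  have hsum : (∑ j, ψ (u i * v j) * w j) = ψ (u i) := by
    subst hw
    rw [Fintype.sum_eq_single (⟨d - 1, by omega⟩ : Fin d)]
    · simp [hv]
    · intro j hj
      have : (j : ℕ) ≠ d - 1 := fun h => hj (Fin.ext h)
      simp [this]
  rw [hsum, hφ, Finset.mul_sum]
  conv_rhs => rw [Finset.sum_comm]
  refine Finset.sum_congr rfl fun l hl => ?_
  have h1 : (ψ (u i)) ^ l = ∑ r ∈ Finset.range (l * K.sup id + 1), γ l r * u i ^ r := by
    rw [hψ]; exact psi_pow K α γ hγ (u i) l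
  rw [mul_pow, h1, hψ (u i * v jk.1), Finset.sum_mul]
  refine Finset.sum_congr rfl fun k hk => ?_
  rw [Finset.sum_mul, Finset.mul_sum, Finset.mul_sum]
  refine Finset.sum_congr rfl fun r _ => ?_
  rw [mul_pow, pow_add]
  ring
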